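/- Let [b,i] and [b',i] be intervals in the homology or boundary barcode of a simplex-wise zigzag filtration F_i with b ≺ b', and suppose wire bundles W and W' generate representatives for [b,i] and [b',i] respectively. If b < b', then the bundle W ⊞ W' (symmetric difference) generates the representative rep ⊞ rep', where rep and rep' are the representatives generated by W and W'; hence W ⊞ W' generates a representative for [b',i]. -/

import Mathlib

/-- A simplex is a finite set of (natural-number) vertices. -/
abbrev Simplex : Type := Finset ℕ

/-- A chain over ℤ/2 (all degrees together) is a finitely supported
function from simplices to ℤ/2. -/
abbrev Chain : Type := Simplex →₀ ZMod 2

/-- A (finite) simplicial complex: a finite set of simplices closed under faces. -/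
def IsComplex (K : Finset Simplex) : Prop := ∀ s ∈ K, ∀ t ⊆ s, t ∈ K

/-- Boundary of a single simplex over ℤ/2. -/
noncomputable def bdrySimplex (s : Simplex) : Chain :=
  ∑ x ∈ s, Finsupp.single (s.erase x) 1

/-- The boundary operator on chains (all degrees), over ℤ/2. -/
noncomputable def bdry : Chain →ₗ[ZMod 2] Chain :=
  Finsupp.lsum (ZMod 2) fun s => LinearMap.toSpanSingleton (ZMod 2) Chain (bdrySimplex s)

/-- The chain group of a complex `K`: chains supported on `K`. -/
noncomputable def chainsOf (K : Finset Simplex) : Submodule (ZMod 2) Chain :=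
  Finsupp.supported (ZMod 2) (ZMod 2) (↑K : Set Simplex)

/-- The cycle group `Z(K)` (all degrees). -/
noncomputable def cyclesOf (K : Finset Simplex) : Submodule (ZMod 2) Chain :=
  chainsOf K ⊓ LinearMap.ker bdry

/-- The boundary group `B(K)` (all degrees). -/
noncomputable def bdriesOf (K : Finset Simplex) : Submodule (ZMod 2) Chain :=
  Submodule.map bdry (chainsOf K)

theorem chainsOf_mono {K K' : Finset Simplex} (h : K ⊆ K') : chainsOf K ≤ chainsOf K' :=
  Finsupp.supported_mono (by exact_mod_cast h)

theorem cyclesOf_mono {K K' : Finset Simplex} (h : K ⊆ K') : cyclesOf K ≤ cyclesOf K' :=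
  inf_le_inf_right _ (chainsOf_mono h)

theorem bdriesOf_mono {K K' : Finset Simplex} (h : K ⊆ K') : bdriesOf K ≤ bdriesOf K' :=
  Submodule.map_mono (chainsOf_mono h)

/-- `B(K)` viewed inside `Z(K)`. -/
noncomputable def homologyRel (K : Finset Simplex) : Submodule (ZMod 2) (cyclesOf K) :=
  (bdriesOf K).comap (cyclesOf K).subtype

/-- The homology `H(K) = Z(K)/B(K)` over ℤ/2, all degrees summed. -/
noncomputable abbrev homology (K : Finset Simplex) :=
  cyclesOf K ⧸ homologyRel K

/-- The inclusion-induced map on homology. -/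
noncomputable def inducedH {K K' : Finset Simplex} (h : K ⊆ K') :
    homology K →ₗ[ZMod 2] homology K' :=
  Submodule.mapQ _ _ (Submodule.inclusion (cyclesOf_mono h)) (by
    intro x hx
    simp only [homologyRel, Submodule.mem_comap, Submodule.coe_subtype,
      Submodule.coe_inclusion] at hx ⊢
    exact bdriesOf_mono h hx)

open Classical in
/-- The homology class of a chain (zero if the chain is not a cycle of `K`). -/
noncomputable def hclass (K : Finset Simplex) (c : Chain) : homology K :=
  if h : c ∈ cyclesOf K then Submodule.Quotient.mk ⟨c, h⟩ else 0

/-- A simplex-wise zigzag filtration of length `m` starting at the empty complex: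
each arrow inserts or deletes exactly one simplex. -/
structure ZZ (m : ℕ) where
  K : ℕ → Finset Simplex
  cpx : ∀ j, IsComplex (K j)
  empty0 : K 0 = ∅
  step : ∀ j < m, (∃ σ, σ ∉ K j ∧ K (j+1) = insert σ (K j)) ∨
                  (∃ σ, σ ∉ K (j+1) ∧ K j = insert σ (K (j+1)))

/-- Homology representative for the interval `[b,d]` of the zigzag module of `F_i`
(Definition of homology representatives). -/
def IsHRep {m : ℕ} (F : ZZ m) (i b d : ℕ) (z : ℕ → Chain) : Prop :=
  1 ≤ b ∧ b ≤ d ∧ d ≤ i ∧ i ≤ m ∧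
  (∀ α, b ≤ α → α ≤ d → z α ∈ cyclesOf (F.K α)) ∧
  (∀ α, b ≤ α → α < d →
    (F.K α ⊆ F.K (α+1) → z α + z (α+1) ∈ bdriesOf (F.K (α+1))) ∧
    (F.K (α+1) ⊆ F.K α → z α + z (α+1) ∈ bdriesOf (F.K α))) ∧
  ((F.K (b-1) ⊆ F.K b → z b ∉ cyclesOf (F.K (b-1))) ∧
   (F.K b ⊆ F.K (b-1) → z b ∈ bdriesOf (F.K (b-1)) ∧ z b ∉ bdriesOf (F.K b))) ∧
  (d < i →
    (F.K (d+1) ⊆ F.K d → z d ∉ cyclesOf (F.K (d+1))) ∧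
    (F.K d ⊆ F.K (d+1) → z d ∈ bdriesOf (F.K (d+1)) ∧ z d ∉ bdriesOf (F.K d)))

/-- Boundary representative for the interval `[b,d]` of the boundary zigzag module of `F_i`. -/
def IsBRep {m : ℕ} (F : ZZ m) (i b d : ℕ) (z : ℕ → Chain) : Prop :=
  1 ≤ b ∧ b ≤ d ∧ d ≤ i ∧ i ≤ m ∧
  (∀ α, b ≤ α → α ≤ d → z α ∈ bdriesOf (F.K α)) ∧
  (∀ α, b ≤ α → α < d → z (α+1) = z α) ∧
  (F.K (b-1) ⊆ F.K b ∧ z b ∉ bdriesOf (F.K (b-1))) ∧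
  (d < i → F.K (d+1) ⊆ F.K d ∧ z d ∉ bdriesOf (F.K (d+1)))

/-- `j ∈ P^H(F_i)`: homology birth index. -/
def HBirthAt {m : ℕ} (F : ZZ m) (i j : ℕ) : Prop :=
  1 ≤ j ∧ j ≤ i ∧ i ≤ m ∧
  ((∃ h : F.K (j-1) ⊆ F.K j, Function.Injective (inducedH h)) ∨
   (∃ h : F.K j ⊆ F.K (j-1), Function.Surjective (inducedH h)))

/-- `j ∈ P^B(F_i)`: boundary birth index. -/
def BBirthAt {m : ℕ} (F : ZZ m) (i j : ℕ) : Prop :=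
  1 ≤ j ∧ j ≤ i ∧ i ≤ m ∧ F.K (j-1) ⊆ F.K j ∧ bdriesOf (F.K (j-1)) ≠ bdriesOf (F.K j)

/-- `j ∈ N^H(F_i)` for `j < i` (the arrow at `j` kills a homology class). -/
def HDeathAt {m : ℕ} (F : ZZ m) (i j : ℕ) : Prop :=
  j < i ∧ i ≤ m ∧
  ((∃ h : F.K j ⊆ F.K (j+1), ¬ Function.Injective (inducedH h)) ∨
   (∃ h : F.K (j+1) ⊆ F.K j, ¬ Function.Surjective (inducedH h)))

/-- `j ∈ N^B(F_i)` for `j < i` (the arrow at `j` kills a boundary class). -/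
def BDeathAt {m : ℕ} (F : ZZ m) (i j : ℕ) : Prop :=
  j < i ∧ i ≤ m ∧
  ∃ _ : F.K (j+1) ⊆ F.K j, bdriesOf (F.K (j+1)) ≠ bdriesOf (F.K j)

/-- The total order `≺` on birth indices (Definition of the total order). -/
def Prec {m : ℕ} (F : ZZ m) (i b b' : ℕ) : Prop :=
  (BBirthAt F i b ∧ HBirthAt F i b') ∨
  (BBirthAt F i b ∧ BBirthAt F i b' ∧ b < b') ∨
  (HBirthAt F i b ∧ HBirthAt F i b' ∧ b < b' ∧ F.K (b'-1) ⊆ F.K b') ∨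
  (HBirthAt F i b ∧ HBirthAt F i b' ∧ b' < b ∧ F.K b ⊆ F.K (b-1))

/-- A wire at index `i` (Definition of wires). -/
def IsWire {m : ℕ} (F : ZZ m) (i : ℕ) (c : Chain) : Prop :=
  1 ≤ i ∧ i ≤ m ∧ c ∈ cyclesOf (F.K i) ∧
  ((F.K (i-1) ⊆ F.K i ∧ c ∉ cyclesOf (F.K (i-1))) ∨
   (F.K i ⊆ F.K (i-1) ∧ c ∈ bdriesOf (F.K (i-1)) ∧ c ∉ bdriesOf (F.K i)) ∨
   (F.K (i-1) ⊆ F.K i ∧ c ∈ bdriesOf (F.K i) ∧ c ∉ bdriesOf (F.K (i-1))))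

/-- Partial sum of the wires in the bundle `W` whose starting index is `≤ α`. -/
noncomputable def psum (w : ℕ → Chain) (W : Finset ℕ) (α : ℕ) : Chain :=
  ∑ j ∈ W.filter (· ≤ α), w j

/-- A boundary bundle `W` (with wires `w`) alive till index `b`. -/
def AliveTill {m : ℕ} (F : ZZ m) (w : ℕ → Chain) (W : Finset ℕ) (b : ℕ) : Prop :=
  ∀ α ≤ b, psum w W α ∈ bdriesOf (F.K α)

/-- `S` (with representatives `z`) is the homology barcode `Pers^H(F_i)`:
each interval carries a representative and, at every index `j`, the classes of the
representative cycles of the intervals containing `j` form a basis of `H(K_j)`. -/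
def IsHBarcode {m : ℕ} (F : ZZ m) (i : ℕ) (S : Finset (ℕ × ℕ))
    (z : ℕ × ℕ → ℕ → Chain) : Prop :=
  (∀ q ∈ S, IsHRep F i q.1 q.2 (z q)) ∧
  ∀ j ≤ i,
    LinearIndependent (ZMod 2)
      (fun q : {q : ℕ × ℕ // q ∈ S ∧ q.1 ≤ j ∧ j ≤ q.2} => hclass (F.K j) (z q.val j)) ∧
    Submodule.span (ZMod 2)
      (Set.range (fun q : {q : ℕ × ℕ // q ∈ S ∧ q.1 ≤ j ∧ j ≤ q.2} =>
        hclass (F.K j) (z q.val j))) = ⊤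

/-- `S` (with representatives `z`) is the boundary barcode `Pers^B(F_i)`. -/
def IsBBarcode {m : ℕ} (F : ZZ m) (i : ℕ) (S : Finset (ℕ × ℕ))
    (z : ℕ × ℕ → ℕ → Chain) : Prop :=
  (∀ q ∈ S, IsBRep F i q.1 q.2 (z q)) ∧
  ∀ j ≤ i,
    LinearIndependent (ZMod 2)
      (fun q : {q : ℕ × ℕ // q ∈ S ∧ q.1 ≤ j ∧ j ≤ q.2} => z q.val j) ∧
    Submodule.span (ZMod 2)
      (Set.range (fun q : {q : ℕ × ℕ // q ∈ S ∧ q.1 ≤ j ∧ j ≤ q.2} =>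
        z q.val j)) = bdriesOf (F.K j)


lemma chain_add_self (x : Chain) : x + x = 0 := by
  ext s; simp [Finsupp.add_apply, CharTwo.add_self_eq_zero]

lemma chain_cancel (a c : Chain) : a + (a + c) = c := by
  rw [← add_assoc, chain_add_self, zero_add]

lemma bdry_single (s : Simplex) (a : ZMod 2) : bdry (Finsupp.single s a) = a • bdrySimplex s := by
  simp [bdry, Finsupp.lsum_single, LinearMap.toSpanSingleton_apply]

lemma bdry_bdrySimplex (s : Simplex) : bdry (bdrySimplex s) = 0 := by
  rw [bdrySimplex, map_sum]
  have h1 : ∀ x ∈ s, bdry (Finsupp.single (s.erase x) (1 : ZMod 2))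
      = ∑ y ∈ s.erase x, Finsupp.single ((s.erase x).erase y) (1 : ZMod 2) := by
    intro x _; rw [bdry_single, one_smul, bdrySimplex]
  rw [Finset.sum_congr rfl h1, Finset.sum_sigma']
  refine Finset.sum_involution (fun p _ => ⟨p.2, p.1⟩) (fun p hp => ?_) (fun p hp _ he => ?_)
    (fun p hp => ?_) (fun p hp => ?_)
  · have : (s.erase p.1).erase p.2 = (s.erase p.2).erase p.1 := Finset.erase_right_comm
    rw [this]; exact chain_add_self _
  · simp only [Finset.mem_sigma, Finset.mem_erase] at hp
    obtain ⟨a, c⟩ := p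
    injection he with h1 h2
    exact hp.2.1 h1
  · simp only [Finset.mem_sigma, Finset.mem_erase] at hp ⊢
    exact ⟨hp.2.2, Ne.symm hp.2.1, hp.1⟩
  · obtain ⟨a, c⟩ := p; rfl

lemma bdry_bdry (c : Chain) : bdry (bdry c) = 0 := by
  induction c using Finsupp.induction with
  | zero => simp
  | single_add s a f _ _ ih => rw [map_add, map_add, bdry_single, map_smul, bdry_bdrySimplex, smul_zero, zero_add, ih]
lemma mem_chainsOf {K : Finset Simplex} {c : Chain} :
    c ∈ chainsOf K ↔ ↑c.support ⊆ (↑K : Set Simplex) := Finsupp.mem_supported _ _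

lemma single_mem_chainsOf {K : Finset Simplex} {s : Simplex} (hs : s ∈ K) (a : ZMod 2) :
    Finsupp.single s a ∈ chainsOf K := Finsupp.single_mem_supported _ _ hs

lemma bdrySimplex_mem_chainsOf {K : Finset Simplex} (hK : IsComplex K) {s : Simplex}
    (hs : s ∈ K) : bdrySimplex s ∈ chainsOf K := by
  rw [bdrySimplex]
  exact Submodule.sum_mem _ fun x _ =>
    single_mem_chainsOf (hK s hs _ (Finset.erase_subset x s)) 1

lemma bdry_mem_chainsOf {K : Finset Simplex} (hK : IsComplex K) {c : Chain}
    (hc : c ∈ chainsOf K) : bdry c ∈ chainsOf K := by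
  have : bdry c = ∑ s ∈ c.support, (c s) • bdrySimplex s := by
    conv_lhs => rw [← Finsupp.sum_single c]
    rw [map_finsuppSum]
    exact Finset.sum_congr rfl fun s _ => bdry_single s (c s)
  rw [this]
  exact Submodule.sum_mem _ fun s hs =>
    Submodule.smul_mem _ _ (bdrySimplex_mem_chainsOf hK (mem_chainsOf.mp hc hs))

lemma mem_bdriesOf_ker {K : Finset Simplex} {x : Chain} (hx : x ∈ bdriesOf K) :
    bdry x = 0 := by
  obtain ⟨c, -, rfl⟩ := hx; exact bdry_bdry c

lemma bdriesOf_le_cyclesOf {K : Finset Simplex} (hK : IsComplex K) :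
    bdriesOf K ≤ cyclesOf K := by
  intro x hx
  obtain ⟨c, hc, rfl⟩ := hx
  exact ⟨bdry_mem_chainsOf hK hc, bdry_bdry c⟩

lemma erase_mem_chainsOf {K : Finset Simplex} {σ : Simplex} {c : Chain}
    (hc : c ∈ chainsOf (insert σ K)) : c.erase σ ∈ chainsOf K := by
  rw [mem_chainsOf] at hc ⊢
  intro t ht
  simp only [Finsupp.support_erase, Finset.coe_erase, Set.mem_diff, Finset.mem_coe,
    Finset.mem_erase] at ht
  rcases ht with ⟨hts, hne⟩
  have := hc hts
  simp only [Finset.coe_insert, Set.mem_insert_iff] at this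
  rcases this with h | h
  · exact absurd (Set.mem_singleton_iff.mpr h) hne
  · exact h

lemma chain_decomp (σ : Simplex) (c : Chain) :
    c = Finsupp.single σ (c σ) + c.erase σ := (Finsupp.single_add_erase σ c).symm

/-- boundary of a chain in `insert σ K` decomposes. -/
lemma bdry_insert_decomp {K : Finset Simplex} {σ : Simplex} {c : Chain}
    (hc : c ∈ chainsOf (insert σ K)) :
    bdry c = (c σ) • bdrySimplex σ + bdry (c.erase σ) := by
  conv_lhs => rw [chain_decomp σ c]
  rw [map_add, bdry_single]

lemma bdriesOf_insert_eq {K : Finset Simplex} {σ : Simplex}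
    (h : bdrySimplex σ ∈ bdriesOf K) : bdriesOf (insert σ K) = bdriesOf K := by
  refine le_antisymm ?_ (bdriesOf_mono (Finset.subset_insert _ _))
  rintro x ⟨c, hc, rfl⟩
  rw [bdry_insert_decomp hc]
  exact Submodule.add_mem _ (Submodule.smul_mem _ _ h) ⟨c.erase σ, erase_mem_chainsOf hc, rfl⟩

lemma no_new_cycle {K : Finset Simplex} {σ : Simplex} {z : Chain}
    (hb : bdrySimplex σ ∉ bdriesOf K) (hz : z ∈ cyclesOf (insert σ K)) :
    z ∈ cyclesOf K := by
  obtain ⟨hzc, hzk⟩ := hz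
  have hd : (z σ) • bdrySimplex σ + bdry (z.erase σ) = 0 := by
    rw [← bdry_insert_decomp hzc]; exact hzk
  have h01 : ∀ a : ZMod 2, a = 0 ∨ a = 1 := by decide
  rcases h01 (z σ) with h0 | h1
  · have hz' : z = z.erase σ := by
      conv_lhs => rw [chain_decomp σ z]
      rw [h0, Finsupp.single_zero, zero_add]
    exact ⟨by rw [hz']; exact erase_mem_chainsOf hzc, hzk⟩
  · exfalso
    apply hb
    have : bdrySimplex σ = bdry (z.erase σ) := by
      have h2 := congrArg (fun t => t + bdry (z.erase σ)) hd
      simp only [h1, one_smul] at h2 ⊢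
      simpa [add_assoc, chain_add_self] using h2
    exact this ▸ ⟨z.erase σ, erase_mem_chainsOf hzc, rfl⟩
lemma bdrySimplex_mem_chainsOf_base {K : Finset Simplex} {σ : Simplex}
    (hK : IsComplex (insert σ K)) : bdrySimplex σ ∈ chainsOf K := by
  rw [bdrySimplex]
  refine Submodule.sum_mem _ fun x hx => single_mem_chainsOf ?_ 1
  have h1 : σ.erase x ∈ insert σ K :=
    hK σ (Finset.mem_insert_self _ _) _ (Finset.erase_subset x σ)
  rcases Finset.mem_insert.mp h1 with h | h
  · exact absurd (h ▸ Finset.notMem_erase x σ) (fun f => f hx)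
  · exact h

lemma bdrySimplex_mem_cyclesOf_base {K : Finset Simplex} {σ : Simplex}
    (hK : IsComplex (insert σ K)) : bdrySimplex σ ∈ cyclesOf K :=
  ⟨bdrySimplex_mem_chainsOf_base hK, bdry_bdrySimplex σ⟩

lemma bdriesOf_insert_le_cyclesOf {K : Finset Simplex} {σ : Simplex}
    (hK : IsComplex (insert σ K)) (hK' : IsComplex K) :
    bdriesOf (insert σ K) ≤ cyclesOf K := by
  rintro x ⟨c, hc, rfl⟩
  rw [bdry_insert_decomp hc]
  exact Submodule.add_mem _ (Submodule.smul_mem _ _ (bdrySimplex_mem_cyclesOf_base hK))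
    (bdriesOf_le_cyclesOf hK' ⟨c.erase σ, erase_mem_chainsOf hc, rfl⟩)

lemma step_insert {m : ℕ} (F : ZZ m) {j : ℕ} (hj : j < m) (h : F.K j ⊆ F.K (j+1)) :
    ∃ σ, σ ∉ F.K j ∧ F.K (j+1) = insert σ (F.K j) := by
  rcases F.step j hj with h1 | ⟨σ, hσ, hins⟩
  · exact h1
  · exact absurd (h (hins ▸ Finset.mem_insert_self σ _)) hσ

lemma chain_eq_of_add_eq_zero {x y : Chain} (h : x + y = 0) : x = y := by
  have h2 := congrArg (fun t => t + y) h
  simpa [add_assoc, chain_add_self] using h2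

/-- If `b` is an (insertion-type) index where the boundary group changes, then every cycle of
`K b` is already a cycle of `K (b-1)`; hence no homology representative can be born at `b`. -/
lemma hrep_not_bbirth {m : ℕ} {F : ZZ m} {i b d : ℕ} {z : ℕ → Chain}
    (hz : IsHRep F i b d z) (hB : BBirthAt F i b) : False := by
  obtain ⟨hb1, hbd, hdi, him, hcyc, -, ⟨hbirth, -⟩, -⟩ := hz
  obtain ⟨-, hbi, -, hsub, hne⟩ := hB
  have hbm : b - 1 < m := by omega
  have hb1' : b - 1 + 1 = b := by omega
  obtain ⟨σ, hσ, hins⟩ := step_insert F hbm (by rw [hb1']; exact hsub)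
  rw [hb1'] at hins
  have hnb : bdrySimplex σ ∉ bdriesOf (F.K (b-1)) := by
    intro hmem
    exact hne (by rw [hins, bdriesOf_insert_eq hmem])
  have hzb : z b ∈ cyclesOf (F.K (b-1)) := by
    refine no_new_cycle hnb ?_
    rw [← hins]
    exact hcyc b le_rfl hbd
  exact hbirth hsub hzb

/-- Sum over a symmetric difference, char 2. -/
lemma sum_symmDiff_chain (A B : Finset ℕ) (f : ℕ → Chain) :
    ∑ j ∈ symmDiff A B, f j = ∑ j ∈ A, f j + ∑ j ∈ B, f j := by
  classical
  have h1 : symmDiff A B = (A ∪ B) \ (A ∩ B) := by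
    rw [symmDiff_eq_sup_sdiff_inf]; rfl
  have h2 : ∑ j ∈ (A ∪ B) \ (A ∩ B), f j + ∑ j ∈ A ∩ B, f j = ∑ j ∈ A ∪ B, f j :=
    Finset.sum_sdiff Finset.inter_subset_union
  have h3 := Finset.sum_union_inter (s₁ := A) (s₂ := B) (f := f)
  have h4 := congrArg (fun t => t + ∑ j ∈ A ∩ B, f j) h3
  simp only at h4
  rw [h1]
  have := congrArg (fun t => t + ∑ j ∈ A ∩ B, f j) h2
  simp only [add_assoc, chain_add_self, add_zero] at this h4
  rw [this, h4, add_assoc, add_assoc, chain_add_self, add_zero]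

lemma psum_symmDiff (w : ℕ → Chain) (W W' : Finset ℕ) (α : ℕ) :
    psum w (symmDiff W W') α = psum w W α + psum w W' α := by
  classical
  have hf : (symmDiff W W').filter (· ≤ α) = symmDiff (W.filter (· ≤ α)) (W'.filter (· ≤ α)) := by
    ext j
    simp only [Finset.mem_filter, Finset.mem_symmDiff]
    tauto
  rw [psum, hf, sum_symmDiff_chain]; rfl
lemma mem_homologyRel_iff {K : Finset Simplex} (x : cyclesOf K) :
    x ∈ homologyRel K ↔ (x : Chain) ∈ bdriesOf K := by
  simp [homologyRel, Submodule.mem_comap]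

lemma not_inj_of_new_bdry {K K' : Finset Simplex} (hK' : IsComplex K')
    {σ : Simplex} (hins : K' = insert σ K) (hne : bdriesOf K ≠ bdriesOf K')
    (h : K ⊆ K') (hinj : Function.Injective (inducedH h)) : False := by
  subst hins
  have hnb : bdrySimplex σ ∉ bdriesOf K := fun hmem => hne (bdriesOf_insert_eq hmem).symm
  have hζ : bdrySimplex σ ∈ cyclesOf K := bdrySimplex_mem_cyclesOf_base hK'
  set ζ : cyclesOf K := ⟨bdrySimplex σ, hζ⟩
  have hmap : inducedH h (Submodule.Quotient.mk ζ) = 0 := by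
    rw [inducedH, Submodule.mapQ_apply, Submodule.Quotient.mk_eq_zero]
    rw [mem_homologyRel_iff]
    refine ⟨Finsupp.single σ 1, single_mem_chainsOf (Finset.mem_insert_self _ _) 1, ?_⟩
    rw [bdry_single, one_smul]; rfl
  have h0 : (Submodule.Quotient.mk ζ : homology K) = 0 := by
    apply hinj
    rw [hmap, map_zero]
  rw [Submodule.Quotient.mk_eq_zero, mem_homologyRel_iff] at h0
  exact hnb h0

lemma bdriesOf_congr {K K' : Finset Simplex} (h : K ⊆ K') (h' : K' ⊆ K) :
    bdriesOf K = bdriesOf K' := by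
  rw [Finset.Subset.antisymm h h']
/-- if bundles `W`, `W'` generate representatives for `[b,i]`, `[b',i]`
with `b ≺ b'` and `b < b'`, then `W ⊞ W'` generates the representative `rep ⊞ rep'`
(index-wise sum), hence a representative for `[b',i]`. -/
theorem stmt11 (m i b b' : ℕ) (F : ZZ m) (w : ℕ → Chain) (W W' : Finset ℕ)
    (hprec : Prec F i b b') (hbb' : b < b')
    (hwires : ∀ j ∈ W ∪ W', IsWire F j (w j))
    (hW : IsHRep F i b i (psum w W) ∨ IsBRep F i b i (psum w W))
    (hW' : IsHRep F i b' i (psum w W') ∨ IsBRep F i b' i (psum w W')) :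
    (∀ α, psum w (symmDiff W W') α = psum w W α + psum w W' α) ∧
    (IsHRep F i b' i (psum w W') → IsHRep F i b' i (psum w (symmDiff W W'))) ∧
    (IsBRep F i b' i (psum w W') → IsBRep F i b' i (psum w (symmDiff W W'))) := by
  have hsum := psum_symmDiff w W W'
  refine ⟨hsum, ?_, ?_⟩
  · -- homology representative case
    intro h'
    obtain ⟨hb'1, hb'i, -, him, hcyc', hstep', ⟨hbirI', hbirD'⟩, -⟩ := h'
    have hb1' : b' - 1 + 1 = b' := by omega
    have hbm : b' - 1 < m := by omega
    have hcycW : ∀ α, b' ≤ α → α ≤ i → psum w W α ∈ cyclesOf (F.K α) := by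
      intro α h1 h2
      rcases hW with hH | hB
      · exact hH.2.2.2.2.1 α (by omega) h2
      · exact bdriesOf_le_cyclesOf (F.cpx α) (hB.2.2.2.2.1 α (by omega) h2)
    refine ⟨hb'1, hb'i, le_rfl, him, ?_, ?_, ⟨?_, ?_⟩, fun h => absurd h (lt_irrefl i)⟩
    · intro α h1 h2
      rw [hsum α]
      exact Submodule.add_mem _ (hcycW α h1 h2) (hcyc' α h1 h2)
    · intro α h1 h2
      have hrear : psum w (symmDiff W W') α + psum w (symmDiff W W') (α+1)
          = (psum w W α + psum w W (α+1)) + (psum w W' α + psum w W' (α+1)) := by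
        rw [hsum α, hsum (α+1)]
        exact add_add_add_comm _ _ _ _
      have hstW : (F.K α ⊆ F.K (α+1) → psum w W α + psum w W (α+1) ∈ bdriesOf (F.K (α+1))) ∧
          (F.K (α+1) ⊆ F.K α → psum w W α + psum w W (α+1) ∈ bdriesOf (F.K α)) := by
        rcases hW with hH | hB
        · exact hH.2.2.2.2.2.1 α (by omega) h2
        · have hflat : psum w W (α+1) = psum w W α := hB.2.2.2.2.2.1 α (by omega) h2
          rw [hflat, chain_add_self]
          exact ⟨fun _ => zero_mem _, fun _ => zero_mem _⟩
      exact ⟨fun hsub => by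
          rw [hrear]
          exact Submodule.add_mem _ (hstW.1 hsub) ((hstep' α h1 h2).1 hsub),
        fun hsub => by
          rw [hrear]
          exact Submodule.add_mem _ (hstW.2 hsub) ((hstep' α h1 h2).2 hsub)⟩
    · -- birth at b', insertion case
      intro hsub hmem
      apply hbirI' hsub
      have hZW : psum w W b' ∈ cyclesOf (F.K (b'-1)) := by
        rcases hW with hH | hB
        · obtain ⟨σ, hσ, hins⟩ := step_insert F hbm (by rw [hb1']; exact hsub)
          rw [hb1'] at hins
          have hδ : psum w W (b'-1) + psum w W b' ∈ bdriesOf (F.K b') := by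
            have h3 := (hH.2.2.2.2.2.1 (b'-1) (by omega) (by omega)).1
              (by rw [hb1']; exact hsub)
            rw [hb1'] at h3
            exact h3
          have hle : bdriesOf (F.K b') ≤ cyclesOf (F.K (b'-1)) := by
            have h4 := bdriesOf_insert_le_cyclesOf
              (show IsComplex (insert σ (F.K (b'-1))) by rw [← hins]; exact F.cpx b')
              (F.cpx (b'-1))
            rwa [← hins] at h4
          have h5 : psum w W b'
              = psum w W (b'-1) + (psum w W (b'-1) + psum w W b') :=
            (chain_cancel _ _).symm
          rw [h5]
          exact Submodule.add_mem _ (hH.2.2.2.2.1 (b'-1) (by omega) (by omega)) (hle hδ)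
        · have hflat := hB.2.2.2.2.2.1 (b'-1) (by omega) (by omega)
          rw [hb1'] at hflat
          rw [hflat]
          exact bdriesOf_le_cyclesOf (F.cpx (b'-1))
            (hB.2.2.2.2.1 (b'-1) (by omega) (by omega))
      have h6 : psum w W' b' = psum w W b' + psum w (symmDiff W W') b' := by
        rw [hsum]
        exact (chain_cancel _ _).symm
      rw [h6]
      exact Submodule.add_mem _ hZW hmem
    · -- birth at b', deletion case
      intro hsub
      obtain ⟨hm1', hm2'⟩ := hbirD' hsub
      have hBW : psum w W b' ∈ bdriesOf (F.K b') := by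
        rcases hW with hH | hB
        · exfalso
          rcases hprec with ⟨hBb, -⟩ | ⟨hBb, -, -⟩ | ⟨-, -, -, hsub'⟩ | ⟨-, -, hlt, -⟩
          · exact hrep_not_bbirth hH hBb
          · exact hrep_not_bbirth hH hBb
          · exact hm2' (bdriesOf_congr hsub' hsub ▸ hm1')
          · omega
        · exact hB.2.2.2.2.1 b' (by omega) hb'i
      constructor
      · rw [hsum]
        exact Submodule.add_mem _ (bdriesOf_mono hsub hBW) hm1'
      · intro hmem
        apply hm2'
        have h6 : psum w W' b' = psum w W b' + psum w (symmDiff W W') b' := by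
          rw [hsum]
          exact (chain_cancel _ _).symm
        rw [h6]
        exact Submodule.add_mem _ hBW hmem
  · -- boundary representative case
    intro h'
    obtain ⟨hb'1, hb'i, -, him, hmem', hflat', ⟨hsubB', hnb'⟩, -⟩ := h'
    have hb1' : b' - 1 + 1 = b' := by omega
    have hWB : IsBRep F i b i (psum w W) := by
      rcases hW with hH | hB
      · exfalso
        rcases hprec with ⟨hBb, -⟩ | ⟨hBb, -, -⟩ | ⟨-, hb'H, -, hsub'⟩ | ⟨-, -, hlt, -⟩
        · exact hrep_not_bbirth hH hBb
        · exact hrep_not_bbirth hH hBb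
        · have hmemb' : psum w W' b' ∈ bdriesOf (F.K b') := hmem' b' le_rfl hb'i
          have hneB : bdriesOf (F.K (b'-1)) ≠ bdriesOf (F.K b') :=
            fun he => hnb' (by rw [he]; exact hmemb')
          rcases hb'H.2.2.2 with ⟨h, hinj⟩ | ⟨h, hsurj⟩
          · have hbm : b' - 1 < m := by omega
            obtain ⟨σ, hσ, hins⟩ := step_insert F hbm (by rw [hb1']; exact h)
            rw [hb1'] at hins
            exact not_inj_of_new_bdry (F.cpx b') hins hneB h hinj
          · exact hneB (bdriesOf_congr hsub' h)
        · omega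
      · exact hB
    obtain ⟨hb1, hbi, -, -, hmemW, hflatW, -, -⟩ := hWB
    refine ⟨hb'1, hb'i, le_rfl, him, ?_, ?_, ⟨hsubB', ?_⟩, fun h => absurd h (lt_irrefl i)⟩
    · intro α h1 h2
      rw [hsum α]
      exact Submodule.add_mem _ (hmemW α (by omega) h2) (hmem' α h1 h2)
    · intro α h1 h2
      rw [hsum (α+1), hsum α, hflatW α (by omega) h2, hflat' α h1 h2]
    · intro hmem
      apply hnb'
      have hWb : psum w W b' ∈ bdriesOf (F.K (b'-1)) := by
        have hflat := hflatW (b'-1) (by omega) (by omega)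
        rw [hb1'] at hflat
        rw [hflat]
        exact hmemW (b'-1) (by omega) (by omega)
      have h6 : psum w W' b' = psum w W b' + psum w (symmDiff W W') b' := by
        rw [hsum]
        exact (chain_cancel _ _).symm
      rw [h6]
      exact Submodule.add_mem _ hWb hmem
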